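/- Let T be a balanced tree with k levels (k ≥ 2) and L its graph Laplacian. Suppose f is a function on the vertices with Lf = λf that vanishes at every vertex of level l and at every vertex of level l+1, for some 0 ≤ l ≤ k−2. Then f vanishes at every vertex of level j for all 0 ≤ j ≤ l; in particular f(root) = 0. -/

import Mathlib

open scoped Classical

/-- Vertices of the balanced tree with `k` levels and branching sequence `c`:
a vertex at level `l` (`0 ≤ l ≤ k-1`) is a function assigning to each `i < l` a
label in `Fin (c i)` (the label of the level-`(i+1)` ancestor among its siblings). -/
abbrev BTVert (k : ℕ) (c : ℕ → ℕ) : Type := Σ l : Fin k, ∀ i : Fin l.val, Fin (c i.val)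

/-- `p` is the parent of `v` in the balanced tree. -/
def IsParentOf {k : ℕ} {c : ℕ → ℕ} (p v : BTVert k c) : Prop :=
  ∃ h : p.1.val + 1 = v.1.val,
    ∀ i : Fin p.1.val, v.2 ⟨i.val, by have := i.isLt; omega⟩ = p.2 i

/-- The balanced tree as a simple graph: each non-root vertex is adjacent to its parent. -/
def btGraph (k : ℕ) (c : ℕ → ℕ) : SimpleGraph (BTVert k c) where
  Adj u v := IsParentOf u v ∨ IsParentOf v u
  symm := ⟨fun u v h => h.symm⟩
  loopless := ⟨fun v h => by
    rcases h with ⟨h, -⟩ | ⟨h, -⟩ <;> omega⟩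

/-- The root (the unique vertex at level 0). -/
def btRoot (k : ℕ) (c : ℕ → ℕ) (hk : 0 < k) : BTVert k c :=
  ⟨⟨0, hk⟩, fun i => i.elim0⟩

/-- `u` belongs to the maximal subtree rooted at `v` (`u` is `v` or a descendant of `v`). -/
def InSubtree {k : ℕ} {c : ℕ → ℕ} (v u : BTVert k c) : Prop :=
  ∃ h : v.1.val ≤ u.1.val,
    ∀ i : Fin v.1.val, u.2 ⟨i.val, by have := i.isLt; omega⟩ = v.2 i

/-- A function on the vertices is stratified if it only depends on the level. -/
def Stratified {k : ℕ} {c : ℕ → ℕ} (f : BTVert k c → ℝ) : Prop :=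
  ∀ u v : BTVert k c, u.1 = v.1 → f u = f v

/-- Number of vertices at level `l`: `n(l) = c(0) ⋯ c(l-1)`. -/
def nlev (c : ℕ → ℕ) (l : ℕ) : ℕ := ∏ i ∈ Finset.range l, c i

/-- The common degree `d(l)` of the vertices at level `l`. -/
def branchDeg (k : ℕ) (c : ℕ → ℕ) (l : ℕ) : ℕ :=
  if l = 0 then c 0 else if l = k - 1 then 1 else c l + 1

/-- The symmetric tridiagonal matrix `T^{(l0)}` with diagonal `d(l0), …, d(k-1)` and
off-diagonal `√c(l0), …, √c(k-2)`. -/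
noncomputable def matT (k : ℕ) (c : ℕ → ℕ) (l0 : ℕ) :
    Matrix (Fin (k - l0)) (Fin (k - l0)) ℝ := fun i j =>
  if i = j then (branchDeg k c (l0 + i.val) : ℝ)
  else if i.val + 1 = j.val then Real.sqrt (c (l0 + i.val))
  else if j.val + 1 = i.val then Real.sqrt (c (l0 + j.val))
  else 0

/-- The tridiagonal matrix `S^{(l0)}` with diagonal `d(l0), …, d(k-1)`, subdiagonal
entries `-1` and superdiagonal entries `-c(l0), …, -c(k-2)`. -/
def matS (k : ℕ) (c : ℕ → ℕ) (l0 : ℕ) :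
    Matrix (Fin (k - l0)) (Fin (k - l0)) ℝ := fun i j =>
  if i = j then (branchDeg k c (l0 + i.val) : ℝ)
  else if i.val + 1 = j.val then -(c (l0 + i.val) : ℝ)
  else if j.val + 1 = i.val then -1
  else 0

/-- `lam` is an eigenvalue of the matrix `A`. -/
def IsEigenvalue {V : Type*} [Fintype V] (A : Matrix V V ℝ) (lam : ℝ) : Prop :=
  ∃ f : V → ℝ, f ≠ 0 ∧ A.mulVec f = lam • f

/-- The (geometric) multiplicity of `lam` as an eigenvalue of `A`. -/
noncomputable def eigMult {V : Type*} [Fintype V] (A : Matrix V V ℝ) (lam : ℝ) : ℕ :=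
  Module.finrank ℝ
    ↥(LinearMap.ker (A.mulVecLin - lam • (LinearMap.id : (V → ℝ) →ₗ[ℝ] (V → ℝ))))

/-- The Dirichlet Laplacian on a subset `Ω` of the vertices of the balanced tree:
the principal submatrix of the Laplacian with rows and columns indexed by `Ω`. -/
noncomputable def dirichletLap (k : ℕ) (c : ℕ → ℕ) (Ω : Set (BTVert k c)) :
    Matrix Ω Ω ℝ := fun u v => (btGraph k c).lapMatrix ℝ u.1 v.1

lemma btvert_ext {k : ℕ} {c : ℕ → ℕ} {a b : BTVert k c} (h1 : a.1 = b.1)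
    (h2 : ∀ i : Fin a.1.val, a.2 i = b.2 ⟨i.val, by rw [← h1]; exact i.isLt⟩) : a = b := by
  obtain ⟨la, fa⟩ := a
  obtain ⟨lb, fb⟩ := b
  dsimp only at h1
  subst h1
  simp only [Sigma.mk.inj_iff, heq_eq_eq, true_and]
  funext i
  simpa using h2 i

lemma vanish_step {k : ℕ} {c : ℕ → ℕ} (hk : 2 ≤ k) (hc : ∀ l, l ≤ k - 2 → 1 ≤ c l)
    (lam : ℝ) (f : BTVert k c → ℝ)
    (hf : ((btGraph k c).lapMatrix ℝ).mulVec f = lam • f)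
    (j : ℕ) (hj : j + 1 ≤ k - 1)
    (hA : ∀ v : BTVert k c, v.1.val = j + 1 → f v = 0)
    (hB : ∀ v : BTVert k c, v.1.val = j + 2 → f v = 0)
    (p : BTVert k c) (hp : p.1.val = j) : f p = 0 := by
  -- construct a child v of p at level j+1
  set v : BTVert k c := ⟨⟨j + 1, by omega⟩, fun i =>
    if h' : i.val < p.1.val then p.2 ⟨i.val, h'⟩
    else ⟨0, hc i.val (by have := i.isLt; omega)⟩⟩ with hvdef
  have hvlev : v.1.val = j + 1 := rfl
  have hpv : IsParentOf p v := by
    refine ⟨by omega, fun i => ?_⟩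
    show (if h' : i.val < p.1.val then p.2 ⟨i.val, h'⟩ else _) = p.2 i
    rw [dif_pos i.isLt]
  have hadj : (btGraph k c).Adj v p := Or.inr hpv
  have heq := congrFun hf v
  rw [SimpleGraph.lapMatrix_mulVec_apply, Pi.smul_apply, smul_eq_mul] at heq
  have hv0 : f v = 0 := hA v rfl
  rw [hv0, mul_zero, mul_zero, zero_sub] at heq
  have hsum : ∑ u ∈ (btGraph k c).neighborFinset v, f u = f p := by
    refine Finset.sum_eq_single_of_mem p (by rwa [SimpleGraph.mem_neighborFinset]) ?_
    intro u hu hne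
    rw [SimpleGraph.mem_neighborFinset] at hu
    rcases hu with hvu | huv
    · -- u is a child of v: level j+2
      obtain ⟨hlev2, -⟩ := hvu
      exact hB u (by omega)
    · -- u is a parent of v: u = p
      exfalso
      apply hne
      obtain ⟨hlev, hpre⟩ := huv
      refine btvert_ext (Fin.ext (by omega)) fun i => ?_
      have h2' := hpre i
      simp only [hvdef] at h2'
      rw [← h2']
      dsimp only [v]
      rw [dif_pos (show (i.val : ℕ) < p.1.val by have := i.isLt; omega)]
  rw [hsum] at heq
  linarith

/-- a Laplacian eigenfunction vanishing on two consecutive levels `l`, `l+1`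
vanishes on every level `j ≤ l`; in particular at the root. -/
theorem eigenfunction_vanishing_two_levels (k : ℕ) (hk : 2 ≤ k) (c : ℕ → ℕ)
    (hc : ∀ l, l ≤ k - 2 → 1 ≤ c l) (lam : ℝ) (f : BTVert k c → ℝ)
    (hf : ((btGraph k c).lapMatrix ℝ).mulVec f = lam • f) (l : ℕ) (hl : l ≤ k - 2)
    (h1 : ∀ v : BTVert k c, v.1.val = l → f v = 0)
    (h2 : ∀ v : BTVert k c, v.1.val = l + 1 → f v = 0) :
    (∀ j ≤ l, ∀ v : BTVert k c, v.1.val = j → f v = 0) ∧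
      f (btRoot k c (by omega)) = 0 := by
  have key : ∀ n : ℕ, (∀ v : BTVert k c, v.1.val = l - n → f v = 0) ∧
      (∀ v : BTVert k c, v.1.val = l - n + 1 → f v = 0) := by
    intro n
    induction n with
    | zero => exact ⟨fun v hv => h1 v (by omega), fun v hv => h2 v (by omega)⟩
    | succ n ih =>
      by_cases h0 : l - n = 0
      · have he : l - (n + 1) = l - n := by omega
        rw [he]; exact ih
      · constructor
        · intro v hv
          exact vanish_step hk hc lam f hf (l - (n + 1)) (by omega)
            (fun w hw => ih.1 w (by omega)) (fun w hw => ih.2 w (by omega)) v hv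
        · intro v hv
          exact ih.1 v (by omega)
  constructor
  · intro j hj v hv
    exact (key (l - j)).1 v (by omega)
  · exact (key l).1 (btRoot k c (by omega)) (by simp [btRoot])
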